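/- arXiv:2402.11682 — 4 statements merged into one kernel-verified Lean document; each statement's English description precedes it below -/
import Mathlib

section
/- Equivalence of the supremum form and the classification-error form of the empirical H-divergence (Ben-David's empirical estimate): if H is symmetric, i.e., closed under Boolean complement (h ∈ H implies the function x ↦ !(h x) is in H), then max_{h ∈ H} |P̂_S[h = true] − P̂_T[h = true]| = 1 − min_{h ∈ H} êrr(h); equivalently d̂_H(S, T) = 2 * max_{h ∈ H} |P̂_S[h = true] − P̂_T[h = true]|. -/
/-- Empirical probability that hypothesis `h` outputs `true` on the sample multiset `S`. -/
noncomputable def pTrue {X : Type*} (S : Multiset X) (h : X → Bool) : ℝ :=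
  ((S.countP (fun x => h x = true) : ℕ) : ℝ) / (S.card : ℝ)

/-- Empirical probability that hypothesis `h` outputs `false` on the sample multiset `S`. -/
noncomputable def pFalse {X : Type*} (S : Multiset X) (h : X → Bool) : ℝ :=
  ((S.countP (fun x => h x = false) : ℕ) : ℝ) / (S.card : ℝ)

/-- Combined empirical error of `h`: `P̂_S[h = false] + P̂_T[h = true]`. -/
noncomputable def empErr {X : Type*} (S T : Multiset X) (h : X → Bool) : ℝ :=
  pFalse S h + pTrue T h

/-- Empirical H-divergence: `d̂_H(S, T) = 2 * (1 − min_{h ∈ H} êrr(h))`. -/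
noncomputable def empHDiv {X : Type*} (S T : Multiset X)
    (H : Finset (X → Bool)) (hH : H.Nonempty) : ℝ :=
  2 * (1 - H.inf' hH (fun h => empErr S T h))

lemma pFalse_eq {X : Type*} (S : Multiset X) (hS : S ≠ 0) (h : X → Bool) :
    pFalse S h = 1 - pTrue S h := by
  have hc : (S.card : ℝ) ≠ 0 := by
    exact_mod_cast (Multiset.card_pos.mpr hS).ne'
  have hcount : S.card = S.countP (fun x => h x = true)
      + S.countP (fun x => ¬ (h x = true)) :=
    Multiset.card_eq_countP_add_countP _ S
  have hnot : S.countP (fun x => ¬ (h x = true)) = S.countP (fun x => h x = false) := by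
    apply Multiset.countP_congr rfl
    intro x _; simp
  rw [pFalse, pTrue]
  have hcard := congrArg (fun n : ℕ => (n : ℝ)) hcount
  have hnot' := congrArg (fun n : ℕ => (n : ℝ)) hnot
  push_cast at hcard hnot'
  field_simp
  linarith

lemma pTrue_not {X : Type*} (S : Multiset X) (h : X → Bool) :
    pTrue S (fun x => !(h x)) = pFalse S h := by
  unfold pTrue pFalse
  congr 2
  apply Multiset.countP_congr rfl
  intro x _; simp

/-- Equivalence of the supremum form and the classification-error form of the empirical
H-divergence: if `H` is symmetric (closed under Boolean complement), then
`max_{h ∈ H} |P̂_S[h = true] − P̂_T[h = true]| = 1 − min_{h ∈ H} êrr(h)`; equivalently,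
`d̂_H(S, T) = 2 * max_{h ∈ H} |P̂_S[h = true] − P̂_T[h = true]|`. -/
theorem empHDiv_eq_sup_form_of_symmetric {X : Type*}
    (S T : Multiset X) (hS : S ≠ 0) (hT : T ≠ 0)
    (H : Finset (X → Bool)) (hH : H.Nonempty)
    (hsymm : ∀ h ∈ H, (fun x => !(h x)) ∈ H) :
    H.sup' hH (fun h => |pTrue S h - pTrue T h|)
      = 1 - H.inf' hH (fun h => empErr S T h) ∧
    empHDiv S T H hH = 2 * H.sup' hH (fun h => |pTrue S h - pTrue T h|) := by
  have key : ∀ h ∈ H, 1 - empErr S T h = pTrue S h - pTrue T h := by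
    intro h _
    rw [empErr, pFalse_eq S hS]
    ring
  have main : H.sup' hH (fun h => |pTrue S h - pTrue T h|)
      = 1 - H.inf' hH (fun h => empErr S T h) := by
    apply le_antisymm
    · apply Finset.sup'_le
      intro h hh
      rcases abs_cases (pTrue S h - pTrue T h) with ⟨heq, _⟩ | ⟨heq, _⟩
      · rw [heq, ← key h hh]
        have : H.inf' hH (fun h => empErr S T h) ≤ empErr S T h :=
          Finset.inf'_le _ hh
        linarith
      · rw [heq]
        have hh' := hsymm h hh
        have hle : H.inf' hH (fun h => empErr S T h) ≤ empErr S T (fun x => !(h x)) :=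
          Finset.inf'_le _ hh'
        have e1 : empErr S T (fun x => !(h x)) = 1 - (pTrue T h - pTrue S h) := by
          rw [empErr, pFalse_eq S hS, pTrue_not, pFalse_eq S hS, pTrue_not, pFalse_eq T hT]
          ring
        rw [e1] at hle
        linarith
    · obtain ⟨h0, hh0, hmin⟩ := Finset.exists_mem_eq_inf' hH (fun h => empErr S T h)
      rw [hmin, key h0 hh0]
      calc pTrue S h0 - pTrue T h0 ≤ |pTrue S h0 - pTrue T h0| := le_abs_self _
        _ ≤ _ := Finset.le_sup' (fun h => |pTrue S h - pTrue T h|) hh0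
  exact ⟨main, by rw [empHDiv, main]⟩
end

section
/- Consistency probability bound for a bad hypothesis: let h : X → Bool be measurable, let ε be a real number with 0 ≤ ε ≤ 1, and let m : ℕ. If err(h) ≥ ε, then the probability under μ^{⊗m} of the event {s : Fin m → X | ∀ i, h (s i) = c (s i)} (h is consistent with all m i.i.d. samples) is at most (1 − ε)^m. -/
open MeasureTheory

/-- True error of hypothesis `h` with respect to target concept `c` under distribution `μ`. -/
noncomputable def trueErr {X : Type*} [MeasurableSpace X]
    (μ : Measure X) (c h : X → Bool) : ℝ :=
  (μ {x | h x ≠ c x}).toReal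

/-- Consistency probability bound for a bad hypothesis: if `err(h) ≥ ε`, then the
probability (under `m` i.i.d. draws from `μ`) that `h` is consistent with all `m`
samples is at most `(1 − ε)^m`. -/
theorem consistent_prob_le_of_bad {X : Type*} [MeasurableSpace X]
    (μ : Measure X) [IsProbabilityMeasure μ]
    (c : X → Bool) (hc : Measurable c) (h : X → Bool) (hh : Measurable h)
    (ε : ℝ) (hε0 : 0 ≤ ε) (hε1 : ε ≤ 1) (m : ℕ)
    (hbad : ε ≤ trueErr μ c h) :
    ((Measure.pi fun _ : Fin m => μ)
        {s : Fin m → X | ∀ i : Fin m, h (s i) = c (s i)}).toReal ≤ (1 - ε) ^ m := by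
  have hA : MeasurableSet {x : X | h x = c x} :=
    measurableSet_eq_fun hh hc
  have hset : {s : Fin m → X | ∀ i : Fin m, h (s i) = c (s i)} =
      Set.pi Set.univ (fun _ : Fin m => {x : X | h x = c x}) := by
    ext s; simp [Set.mem_pi]
  rw [hset, Measure.pi_pi]
  simp only [Finset.prod_const, Finset.card_univ, Fintype.card_fin]
  rw [ENNReal.toReal_pow]
  have hle : (μ {x : X | h x = c x}).toReal ≤ 1 - ε := by
    have hcompl : {x : X | h x = c x} = {x : X | h x ≠ c x}ᶜ := by
      ext x; simp
    have hB : MeasurableSet {x : X | h x ≠ c x} := hA.compl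
    rw [hcompl, prob_compl_eq_one_sub hB]
    have := hbad
    unfold trueErr at this
    rw [ENNReal.toReal_sub_of_le (by simp [prob_le_one]) (by simp)]
    simp only [ENNReal.toReal_one]
    linarith
  have h0 : 0 ≤ (μ {x : X | h x = c x}).toReal := ENNReal.toReal_nonneg
  exact pow_le_pow_left₀ h0 hle m
end

section
/- Haussler's theorem for a finite hypothesis class (union bound form, as invoked in Theorem 3.3): let H be a nonempty finite set of measurable hypotheses h : X → Bool, let ε be a real number with 0 ≤ ε ≤ 1, and let m : ℕ. Then the probability under μ^{⊗m} of the event {s : Fin m → X | ∃ h ∈ H, (∀ i, h (s i) = c (s i)) ∧ err(h) > ε} (some hypothesis in H is consistent with the sample yet has true error exceeding ε) is at most |H| * (1 − ε)^m ≤ |H| * exp(−ε * m). -/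
open MeasureTheory

/-- Haussler's theorem for a finite hypothesis class (union bound form): the probability
that some hypothesis in `H` is consistent with the `m` i.i.d. samples yet has true error
exceeding `ε` is at most `|H| * (1 − ε)^m ≤ |H| * exp(−ε * m)`. -/
theorem haussler_union_bound {X : Type*} [MeasurableSpace X]
    (μ : Measure X) [IsProbabilityMeasure μ]
    (c : X → Bool) (hc : Measurable c)
    (H : Finset (X → Bool)) (hH : H.Nonempty) (hmeas : ∀ h ∈ H, Measurable h)
    (ε : ℝ) (hε0 : 0 ≤ ε) (hε1 : ε ≤ 1) (m : ℕ) :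
    ((Measure.pi fun _ : Fin m => μ)
        {s : Fin m → X | ∃ h ∈ H, (∀ i : Fin m, h (s i) = c (s i)) ∧ ε < trueErr μ c h}).toReal
      ≤ (H.card : ℝ) * (1 - ε) ^ m ∧
    (H.card : ℝ) * (1 - ε) ^ m ≤ (H.card : ℝ) * Real.exp (-ε * m) := by
  have h1ε : (0:ℝ) ≤ 1 - ε := by linarith
  set P := Measure.pi fun _ : Fin m => μ with hP
  -- per-hypothesis event
  set T : (X → Bool) → Set (Fin m → X) := fun h =>
    if ε < trueErr μ c h then {s : Fin m → X | ∀ i : Fin m, h (s i) = c (s i)} else ∅ with hT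
  have hsub : {s : Fin m → X | ∃ h ∈ H, (∀ i : Fin m, h (s i) = c (s i)) ∧ ε < trueErr μ c h}
      ⊆ ⋃ h ∈ H, T h := by
    rintro s ⟨h, hhH, hcons, herr⟩
    refine Set.mem_biUnion hhH ?_
    simp only [hT, if_pos herr]
    exact hcons
  have hterm : ∀ h ∈ H, P (T h) ≤ ENNReal.ofReal ((1 - ε) ^ m) := by
    intro h hhH
    by_cases herr : ε < trueErr μ c h
    · simp only [hT, if_pos herr]
      have hA : {s : Fin m → X | ∀ i : Fin m, h (s i) = c (s i)}
          = Set.pi Set.univ (fun _ : Fin m => {x : X | h x = c x}) := by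
        ext s; simp [Set.mem_pi]
      have hAm : MeasurableSet {x : X | h x = c x} :=
        measurableSet_eq_fun (hmeas h hhH) hc
      have hpi : P {s : Fin m → X | ∀ i : Fin m, h (s i) = c (s i)}
          = (μ {x : X | h x = c x}) ^ m := by
        rw [hA, hP, Measure.pi_pi]
        simp
      rw [hpi]
      have hcompl : {x : X | h x = c x}ᶜ = {x : X | h x ≠ c x} := by
        ext x; simp
      have hle : μ {x : X | h x = c x} ≤ ENNReal.ofReal (1 - ε) := by
        have hsum : μ {x : X | h x = c x} + μ {x : X | h x = c x}ᶜ = 1 :=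
          prob_add_prob_compl hAm
        have h2 : ENNReal.ofReal ε ≤ μ {x : X | h x = c x}ᶜ := by
          rw [hcompl]
          exact ENNReal.ofReal_le_of_le_toReal (le_of_lt herr)
        have h3 : μ {x : X | h x = c x} + ENNReal.ofReal ε ≤ 1 := by
          rw [← hsum]; exact add_le_add le_rfl h2
        have h4 : μ {x : X | h x = c x} ≤ 1 - ENNReal.ofReal ε :=
          ENNReal.le_sub_of_add_le_right ENNReal.ofReal_ne_top h3
        rwa [show (1 : ENNReal) - ENNReal.ofReal ε = ENNReal.ofReal (1 - ε) by
          rw [ENNReal.ofReal_sub 1 hε0, ENNReal.ofReal_one]] at h4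
      calc (μ {x : X | h x = c x}) ^ m ≤ (ENNReal.ofReal (1 - ε)) ^ m :=
            pow_le_pow_left' hle m
        _ = ENNReal.ofReal ((1 - ε) ^ m) := (ENNReal.ofReal_pow h1ε m).symm
    · simp [hT, if_neg herr]
  have hmain : P {s : Fin m → X | ∃ h ∈ H, (∀ i : Fin m, h (s i) = c (s i)) ∧ ε < trueErr μ c h}
      ≤ ENNReal.ofReal ((H.card : ℝ) * (1 - ε) ^ m) := by
    calc P {s : Fin m → X | ∃ h ∈ H, (∀ i : Fin m, h (s i) = c (s i)) ∧ ε < trueErr μ c h}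
        ≤ P (⋃ h ∈ H, T h) := measure_mono hsub
      _ ≤ ∑ h ∈ H, P (T h) := measure_biUnion_finset_le H T
      _ ≤ ∑ h ∈ H, ENNReal.ofReal ((1 - ε) ^ m) := Finset.sum_le_sum hterm
      _ = (H.card : ENNReal) * ENNReal.ofReal ((1 - ε) ^ m) := by
          rw [Finset.sum_const, nsmul_eq_mul]
      _ = ENNReal.ofReal ((H.card : ℝ) * (1 - ε) ^ m) := by
          rw [ENNReal.ofReal_mul (by positivity), ENNReal.ofReal_natCast]
  constructor
  · exact ENNReal.toReal_le_of_le_ofReal (by positivity) hmain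
  · have hexp : (1 - ε) ^ m ≤ Real.exp (-ε * m) := by
      have h1 : 1 - ε ≤ Real.exp (-ε) := by
        have := Real.add_one_le_exp (-ε); linarith
      calc (1 - ε) ^ m ≤ (Real.exp (-ε)) ^ m := pow_le_pow_left₀ h1ε h1 m
        _ = Real.exp (-ε * m) := by
            rw [← Real.exp_nat_mul, mul_comm]
    exact mul_le_mul_of_nonneg_left hexp (by positivity)
end

section
/- Haussler's sample complexity bound (the form quoted in Theorem 3.3): let H be a nonempty finite set of measurable hypotheses h : X → Bool, let ε > 0 with ε ≤ 1, let δ be a real number with 0 < δ ≤ 1, and let m : ℕ satisfy (m : ℝ) ≥ (Real.log |H| + Real.log (1/δ)) / ε. Then the probability under μ^{⊗m} of the event {s : Fin m → X | ∃ h ∈ H, (∀ i, h (s i) = c (s i)) ∧ err(h) > ε} is at most δ; i.e., with probability at least 1 − δ, every hypothesis in H consistent with m i.i.d. samples has true error at most ε. -/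
open MeasureTheory

/-- Haussler's sample complexity bound (the form quoted in Theorem 3.3): if
`m ≥ (ln |H| + ln (1/δ)) / ε`, then with probability at least `1 − δ` over `m` i.i.d.
samples, every hypothesis in `H` consistent with the samples has true error at most `ε`. -/
theorem haussler_sample_complexity {X : Type*} [MeasurableSpace X]
    (μ : Measure X) [IsProbabilityMeasure μ]
    (c : X → Bool) (hc : Measurable c)
    (H : Finset (X → Bool)) (hH : H.Nonempty) (hmeas : ∀ h ∈ H, Measurable h)
    (ε : ℝ) (hε0 : 0 < ε) (hε1 : ε ≤ 1)
    (δ : ℝ) (hδ0 : 0 < δ) (hδ1 : δ ≤ 1) (m : ℕ)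
    (hm : (Real.log (H.card : ℝ) + Real.log (1 / δ)) / ε ≤ (m : ℝ)) :
    ((Measure.pi fun _ : Fin m => μ)
        {s : Fin m → X | ∃ h ∈ H, (∀ i : Fin m, h (s i) = c (s i)) ∧ ε < trueErr μ c h}).toReal
      ≤ δ := by
  classical
  set ν := (Measure.pi fun _ : Fin m => μ) with hνdef
  haveI : IsProbabilityMeasure ν := by rw [hνdef]; infer_instance
  set H' := H.filter (fun h => ε < trueErr μ c h) with hH'def
  -- union bound setup
  have hsub : {s : Fin m → X | ∃ h ∈ H, (∀ i : Fin m, h (s i) = c (s i)) ∧ ε < trueErr μ c h}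
      ⊆ ⋃ h ∈ H', {s : Fin m → X | ∀ i : Fin m, h (s i) = c (s i)} := by
    rintro s ⟨h, hh, hcons, herr⟩
    exact Set.mem_biUnion (Finset.mem_filter.2 ⟨hh, herr⟩) hcons
  -- per-hypothesis bound
  have key : ∀ h ∈ H', (ν {s : Fin m → X | ∀ i : Fin m, h (s i) = c (s i)}).toReal
      ≤ (1 - ε) ^ m := by
    intro h hh
    rcases Finset.mem_filter.1 hh with ⟨hhH, herr⟩
    have hA : MeasurableSet {x : X | h x = c x} :=
      measurableSet_eq_fun (hmeas h hhH) hc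
    have hAne : MeasurableSet {x : X | h x ≠ c x} := by
      have : {x : X | h x ≠ c x} = {x : X | h x = c x}ᶜ := by ext x; simp
      rw [this]; exact hA.compl
    have hset : {s : Fin m → X | ∀ i : Fin m, h (s i) = c (s i)}
        = Set.pi Set.univ (fun _ : Fin m => {x : X | h x = c x}) := by
      ext s; simp [Set.mem_univ_pi]
    have hcompl : {x : X | h x = c x} = {x : X | h x ≠ c x}ᶜ := by
      ext x; simp
    have hμle : μ {x : X | h x ≠ c x} ≤ 1 := prob_le_one
    have hμA : (μ {x : X | h x = c x}).toReal = 1 - trueErr μ c h := by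
      rw [hcompl, prob_compl_eq_one_sub hAne, ENNReal.toReal_sub_of_le hμle ENNReal.one_ne_top]
      simp [trueErr]
    rw [hνdef, hset, Measure.pi_pi, Finset.prod_const, Finset.card_univ, Fintype.card_fin,
      ENNReal.toReal_pow, hμA]
    have h1 : 1 - trueErr μ c h ≤ 1 - ε := by linarith
    have h0 : (0:ℝ) ≤ 1 - trueErr μ c h := by
      rw [← hμA]; exact ENNReal.toReal_nonneg
    exact pow_le_pow_left₀ h0 h1 m
  -- union bound
  have hcard0 : (0:ℝ) < (H.card : ℝ) := by
    exact_mod_cast Finset.card_pos.2 hH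
  have hstep1 : (ν {s : Fin m → X | ∃ h ∈ H, (∀ i : Fin m, h (s i) = c (s i)) ∧ ε < trueErr μ c h}).toReal
      ≤ (H.card : ℝ) * (1 - ε) ^ m := by
    calc (ν _).toReal
        ≤ (ν (⋃ h ∈ H', {s : Fin m → X | ∀ i : Fin m, h (s i) = c (s i)})).toReal := by
          apply ENNReal.toReal_mono (measure_ne_top ν _) (measure_mono hsub)
      _ ≤ (∑ h ∈ H', ν {s : Fin m → X | ∀ i : Fin m, h (s i) = c (s i)}).toReal := by
          apply ENNReal.toReal_mono
          · exact (ENNReal.sum_lt_top.2 fun h _ => measure_lt_top ν _).ne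
          · exact measure_biUnion_finset_le H' _
      _ = ∑ h ∈ H', (ν {s : Fin m → X | ∀ i : Fin m, h (s i) = c (s i)}).toReal :=
          ENNReal.toReal_sum fun h _ => measure_ne_top ν _
      _ ≤ ∑ _h ∈ H', (1 - ε) ^ m := Finset.sum_le_sum key
      _ = (H'.card : ℝ) * (1 - ε) ^ m := by rw [Finset.sum_const, nsmul_eq_mul]
      _ ≤ (H.card : ℝ) * (1 - ε) ^ m := by
          apply mul_le_mul_of_nonneg_right
          · exact_mod_cast Finset.card_filter_le H _
          · exact pow_nonneg (by linarith) m
  refine hstep1.trans ?_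
  -- analytic bound
  have hexp : (1 - ε) ^ m ≤ Real.exp (-(ε * m)) := by
    have h1 : 1 - ε ≤ Real.exp (-ε) := by
      have := Real.add_one_le_exp (-ε); linarith
    calc (1 - ε) ^ m ≤ (Real.exp (-ε)) ^ m := pow_le_pow_left₀ (by linarith) h1 m
      _ = Real.exp (-(ε * m)) := by
        rw [← Real.exp_nat_mul]; ring_nf
  have hεm : Real.log (H.card : ℝ) + Real.log (1 / δ) ≤ ε * m := by
    have := (div_le_iff₀ hε0).1 hm
    linarith
  have hfin : Real.exp (-(ε * m)) ≤ δ / (H.card : ℝ) := by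
    have h2 : -(ε * m) ≤ -(Real.log (H.card : ℝ) + Real.log (1 / δ)) := by linarith
    calc Real.exp (-(ε * m)) ≤ Real.exp (-(Real.log (H.card : ℝ) + Real.log (1 / δ))) :=
          Real.exp_le_exp.2 h2
      _ = δ / (H.card : ℝ) := by
          rw [neg_add, Real.exp_add, Real.exp_neg, Real.exp_neg, Real.exp_log hcard0,
            Real.exp_log (by positivity : (0:ℝ) < 1 / δ)]
          field_simp
  calc (H.card : ℝ) * (1 - ε) ^ m ≤ (H.card : ℝ) * Real.exp (-(ε * m)) :=
        mul_le_mul_of_nonneg_left hexp hcard0.le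
    _ ≤ (H.card : ℝ) * (δ / (H.card : ℝ)) := mul_le_mul_of_nonneg_left hfin hcard0.le
    _ = δ := by field_simp
end
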